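/- Let A be a real m×n matrix with columns F₁,…,Fₙ, let A⁺ be a Moore–Penrose pseudoinverse of A, and set S = Iₙ − A⁺·A. Let τ = τ₁ ∪ τ₂ be a subset of column indices, where τ₁ and τ₂ are disjoint and nonempty, the columns {F_k : k ∈ τ₂} are linearly independent, and each F_i with i ∈ τ₁ lies in span{F_k : k ∈ τ₂}. Assume τ is span-separated (span{F_j : j ∈ τ} ∩ span{F_i : i ∉ τ} = {0}) and indecomposable (τ admits no partition into two nonempty subsets Y₁, Y₂ with span{F_j : j ∈ Y₁} ∩ span{F_j : j ∈ Y₂} = {0}). Then: (1) for every k ∈ τ₂ there exists j ∈ τ₁ with S_{k,j} ≠ 0; and (2) for every i ∈ τ₁ there exists j ∈ τ₂ with S_{i,j} ≠ 0. -/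

import Mathlib

open Matrix

private lemma mulVec_eq_sum' {m n : ℕ} (A : Matrix (Fin m) (Fin n) ℝ) (v : Fin n → ℝ) :
    A.mulVec v = ∑ j, v j • Aᵀ j := by
  ext i
  simp [Matrix.mulVec, dotProduct, Finset.sum_apply, Matrix.transpose_apply, mul_comm]

private lemma sum_over_set' {m n : ℕ} (A : Matrix (Fin m) (Fin n) ℝ) (σ : Set (Fin n))
    [Fintype σ] (w : Fin n → ℝ) (hw : ∀ l, l ∉ σ → w l = 0) :
    ∑ k : σ, w k • Aᵀ (k : Fin n) = A.mulVec w := by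
  classical
  rw [mulVec_eq_sum',
    ← Finset.sum_subtype σ.toFinset (fun x => Set.mem_toFinset) (fun j => w j • Aᵀ j)]
  exact (Finset.sum_subset (s₁ := σ.toFinset) (s₂ := Finset.univ)
    (f := fun j => w j • Aᵀ j) (Finset.subset_univ _)
    (fun x _ hx => by show w x • Aᵀ x = 0
                      rw [hw x (by simpa using hx), zero_smul]))

private lemma span_image_coeffs' {m n : ℕ} (A : Matrix (Fin m) (Fin n) ℝ) (σ : Set (Fin n))
    (x : Fin m → ℝ) (hx : x ∈ Submodule.span ℝ (Aᵀ '' σ)) :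
    ∃ d : Fin n → ℝ, (∀ j, j ∉ σ → d j = 0) ∧ A.mulVec d = x := by
  classical
  haveI : Fintype σ := (Set.toFinite σ).fintype
  change x ∈ Submodule.span ℝ ((fun j => Aᵀ j) '' σ) at hx
  rw [Set.image_eq_range] at hx
  obtain ⟨c, hc⟩ := (Submodule.mem_span_range_iff_exists_fun ℝ).1 hx
  refine ⟨fun j => if h : j ∈ σ then c ⟨j, h⟩ else 0, fun j hj => dif_neg hj, ?_⟩
  rw [← sum_over_set' A σ _ (fun l hl => dif_neg hl), ← hc]
  exact Finset.sum_congr rfl (fun k _ => by rw [dif_pos k.2])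

private lemma mulVec_indicator_mem_span' {m n : ℕ} (A : Matrix (Fin m) (Fin n) ℝ)
    (σ : Set (Fin n)) (v : Fin n → ℝ) :
    A.mulVec (σ.indicator v) ∈ Submodule.span ℝ (Aᵀ '' σ) := by
  classical
  rw [mulVec_eq_sum']
  refine Submodule.sum_mem _ (fun j _ => ?_)
  by_cases hj : j ∈ σ
  · exact Submodule.smul_mem _ _ (Submodule.subset_span ⟨j, hj, rfl⟩)
  · rw [Set.indicator_of_notMem hj, zero_smul]; exact Submodule.zero_mem _

/-- Let `τ = τ₁ ∪ τ₂` be a span-separated, indecomposable cluster of columns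
of `A`, where the columns indexed by `τ₂` are linearly independent and every
column indexed by `τ₁` lies in their span.  Then every `k ∈ τ₂` has `j ∈ τ₁`
with `S k j ≠ 0`, and every `i ∈ τ₁` has `j ∈ τ₂` with `S i j ≠ 0`. -/
theorem signature_connects_basis_and_dependent_columns
    {m n : ℕ} (A : Matrix (Fin m) (Fin n) ℝ) (Ap : Matrix (Fin n) (Fin m) ℝ)
    (h1 : A * Ap * A = A) (h2 : Ap * A * Ap = Ap)
    (h3 : (A * Ap)ᵀ = A * Ap) (h4 : (Ap * A)ᵀ = Ap * A)
    (S : Matrix (Fin n) (Fin n) ℝ) (hS : S = 1 - Ap * A)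
    (τ τ₁ τ₂ : Set (Fin n)) (hτ : τ = τ₁ ∪ τ₂)
    (hdisj : Disjoint τ₁ τ₂) (hne1 : τ₁.Nonempty) (hne2 : τ₂.Nonempty)
    (hli : LinearIndependent ℝ (fun k : τ₂ => Aᵀ k.1))
    (hspan : ∀ i ∈ τ₁, Aᵀ i ∈ Submodule.span ℝ (Aᵀ '' τ₂))
    (hsep : Submodule.span ℝ (Aᵀ '' τ) ⊓ Submodule.span ℝ (Aᵀ '' τᶜ) = ⊥)
    (hind : ¬ ∃ Y₁ Y₂ : Set (Fin n), Y₁.Nonempty ∧ Y₂.Nonempty ∧ Disjoint Y₁ Y₂ ∧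
      Y₁ ∪ Y₂ = τ ∧
      Submodule.span ℝ (Aᵀ '' Y₁) ⊓ Submodule.span ℝ (Aᵀ '' Y₂) = ⊥) :
    (∀ k ∈ τ₂, ∃ j ∈ τ₁, S k j ≠ 0) ∧ (∀ i ∈ τ₁, ∃ j ∈ τ₂, S i j ≠ 0) := by
  classical
  haveI : Fintype τ₂ := (Set.toFinite τ₂).fintype
  -- basic facts
  have hτ₁τ : τ₁ ⊆ τ := hτ ▸ Set.subset_union_left
  have hτ₂τ : τ₂ ⊆ τ := hτ ▸ Set.subset_union_right
  have hAS : A * S = 0 := by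
    rw [hS, Matrix.mul_sub, Matrix.mul_one, ← Matrix.mul_assoc, h1, sub_self]
  have hSsymm : ∀ i j, S i j = S j i := by
    intro i j
    have hT : Sᵀ = S := by rw [hS, Matrix.transpose_sub, Matrix.transpose_one, h4]
    conv_rhs => rw [← hT]
    rfl
  have hPker : ∀ v : Fin n → ℝ, A.mulVec v = 0 → (Ap * A).mulVec v = 0 := by
    intro v hv
    rw [← Matrix.mulVec_mulVec, hv, Matrix.mulVec_zero]
  have hSv : ∀ v : Fin n → ℝ, A.mulVec v = 0 → S.mulVec v = v := by
    intro v hv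
    rw [hS, Matrix.sub_mulVec, Matrix.one_mulVec, hPker v hv, sub_zero]
  have hcolS : ∀ j : Fin n, (fun l => S l j) = S.mulVec (Pi.single j 1) := by
    intro j; ext l; simp [Matrix.mulVec_single]
  have hcol : ∀ j : Fin n, A.mulVec (fun l => S l j) = 0 := by
    intro j
    rw [hcolS j, Matrix.mulVec_mulVec, hAS, Matrix.zero_mulVec]
  -- restriction of kernel vectors to τ stays in the kernel
  have hrestrict : ∀ v : Fin n → ℝ, A.mulVec v = 0 → A.mulVec (τ.indicator v) = 0 := by
    intro v hv
    have hm1 : A.mulVec (τ.indicator v) ∈ Submodule.span ℝ (Aᵀ '' τ) :=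
      mulVec_indicator_mem_span' A τ v
    have hm2 : A.mulVec (τ.indicator v) ∈ Submodule.span ℝ (Aᵀ '' τᶜ) := by
      have hsplit : τ.indicator v = v - τᶜ.indicator v := by
        ext j; by_cases hj : j ∈ τ <;> simp [Set.indicator, hj]
      rw [hsplit, Matrix.mulVec_sub, hv, zero_sub]
      exact Submodule.neg_mem _ (mulVec_indicator_mem_span' A τᶜ v)
    have := Submodule.mem_inf.mpr ⟨hm1, hm2⟩
    rw [hsep, Submodule.mem_bot] at this
    exact this
  -- L1 : entries of S connecting τ to τᶜ vanish
  have L1 : ∀ i ∈ τ, ∀ j, j ∉ τ → S i j = 0 := by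
    intro i hi j hj
    set w : Fin n → ℝ := fun l => S l j with hwdef
    set u : Fin n → ℝ := τ.indicator w with hudef
    have huker : A.mulVec u = 0 := hrestrict w (hcol j)
    have huu : u ⬝ᵥ u = 0 := by
      have e1 : u ⬝ᵥ u = u ⬝ᵥ w := by
        unfold dotProduct
        refine Finset.sum_congr rfl (fun l _ => ?_)
        by_cases hl : l ∈ τ <;> simp [hudef, Set.indicator, hl]
      have e2 : w = Pi.single j 1 - (Ap * A).mulVec (Pi.single j 1) := by
        rw [hwdef, hcolS j, hS, Matrix.sub_mulVec, Matrix.one_mulVec]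
      have e3 : u ᵥ* (Ap * A) = 0 := by
        rw [← Matrix.mulVec_transpose, h4, hPker u huker]
      rw [e1, e2, dotProduct_sub, dotProduct_single,
        dotProduct_mulVec, e3, zero_dotProduct, mul_one]
      have : u j = 0 := Set.indicator_of_notMem hj w
      rw [this, sub_zero]
    have hu0 : ∀ l, u l = 0 := by
      intro l
      have h := (Finset.sum_eq_zero_iff_of_nonneg
        (fun x _ => mul_self_nonneg (u x))).1 huu l (Finset.mem_univ l)
      exact mul_self_eq_zero.1 h
    have := hu0 i
    rwa [hudef, Set.indicator_of_mem hi] at this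
  -- kernel vectors attached to dependent columns
  have hkervec : ∀ i ∈ τ₁, ∃ d : Fin n → ℝ, (∀ j, j ∉ τ₂ → d j = 0) ∧
      A.mulVec (Pi.single i 1 - d) = 0 := by
    intro i hi
    obtain ⟨d, hd0, hdA⟩ := span_image_coeffs' A τ₂ _ (hspan i hi)
    refine ⟨d, hd0, ?_⟩
    rw [Matrix.mulVec_sub, hdA, Matrix.mulVec_single]
    ext r; simp [Matrix.transpose_apply]
  have hint : ∀ i ∈ τ₁, i ∉ τ₂ := fun i hi => Set.disjoint_left.1 hdisj hi
  constructor
  · -- part (1)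
    intro k hk
    by_contra hcon
    push_neg at hcon
    -- the k-th column of S vanishes
    have hwsupp : ∀ l, l ∉ τ₂ → S l k = 0 := by
      intro l hl
      rw [hSsymm l k]
      by_cases hlτ : l ∈ τ
      · have hmem : l ∈ τ₁ ∪ τ₂ := by rw [← hτ]; exact hlτ
        rcases hmem with h | h
        · exact hcon l h
        · exact absurd h hl
      · exact L1 k (hτ₂τ hk) l hlτ
    have hwz : ∀ l, S l k = 0 := by
      have hsum : ∑ k' : τ₂, S (k' : Fin n) k • Aᵀ (k' : Fin n) = 0 :=
        (sum_over_set' A τ₂ (fun l => S l k) hwsupp).trans (hcol k)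
      have hall := Fintype.linearIndependent_iff.1 hli (fun k' => S (k' : Fin n) k) hsum
      intro l
      by_cases hl : l ∈ τ₂
      · exact hall ⟨l, hl⟩
      · exact hwsupp l hl
    -- every kernel vector vanishes at coordinate k
    have hvk : ∀ v : Fin n → ℝ, A.mulVec v = 0 → v k = 0 := by
      intro v hv
      have h := congrFun (hSv v hv) k
      rw [← h]
      show ∑ l, S k l * v l = 0
      refine Finset.sum_eq_zero (fun l _ => ?_)
      rw [hSsymm k l, hwz l, zero_mul]

    -- build the forbidden decomposition
    refine hind ⟨{k}, τ \ {k}, ⟨k, rfl⟩, ?_, ?_, ?_, ?_⟩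
    · obtain ⟨i, hi⟩ := hne1
      exact ⟨i, hτ₁τ hi, fun h => hint i hi (h ▸ hk)⟩
    · exact Set.disjoint_left.2 (fun j hj => by
        rw [Set.mem_singleton_iff] at hj
        exact fun hj2 => hj2.2 hj)
    · rw [Set.singleton_union, Set.insert_diff_singleton,
        Set.insert_eq_self.2 (hτ₂τ hk)]
    · rw [eq_bot_iff]
      rintro x hx
      obtain ⟨hx1, hx2⟩ := Submodule.mem_inf.1 hx
      change x ∈ Submodule.span ℝ ((fun j => Aᵀ j) '' {k}) at hx1
      rw [Set.image_singleton, Submodule.mem_span_singleton] at hx1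
      obtain ⟨a, ha⟩ := hx1
      obtain ⟨d, hd0, hdA⟩ := span_image_coeffs' A (τ \ {k}) x hx2
      have hker : A.mulVec ((a • (Pi.single k 1 : Fin n → ℝ)) - d) = 0 := by
        rw [Matrix.mulVec_sub, Matrix.mulVec_smul, hdA, Matrix.mulVec_single,
          sub_eq_zero, ← ha]
        ext r; simp [Matrix.transpose_apply]
      have hvk0 := hvk _ hker
      have hdk : d k = 0 := hd0 k (fun h => h.2 rfl)
      have ha0 : a = 0 := by simpa [hdk] using hvk0
      rw [Submodule.mem_bot, ← ha, ha0, zero_smul]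
  · -- part (2)
    intro i hi
    by_contra hcon
    push_neg at hcon
    -- the i-th row of S is the i-th standard basis vector
    have hrow1 : ∀ i' ∈ τ₁, S i i' = if i = i' then (1:ℝ) else 0 := by
      intro i' hi'
      obtain ⟨d, hd0, hker⟩ := hkervec i' hi'
      have h := congrFun (hSv _ hker) i
      have hlhs : (S.mulVec (Pi.single i' 1 - d)) i = S i i' - ∑ l, S i l * d l := by
        rw [Matrix.mulVec_sub, Pi.sub_apply, Matrix.mulVec_single]
        simp [Matrix.mulVec, dotProduct]
      have hz : ∑ l, S i l * d l = 0 := by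
        refine Finset.sum_eq_zero (fun l _ => ?_)
        by_cases hl : l ∈ τ₂
        · rw [hcon l hl, zero_mul]
        · rw [hd0 l hl, mul_zero]
      rw [hlhs, hz, sub_zero] at h
      rw [h, Pi.sub_apply, hd0 i (hint i hi), sub_zero, Pi.single_apply]
    have hrowall : ∀ l, S l i = if l = i then (1:ℝ) else 0 := by
      intro l
      rw [hSsymm l i]
      by_cases hl1 : l ∈ τ₁
      · rw [hrow1 l hl1]
        simp [eq_comm]
      · by_cases hl2 : l ∈ τ₂
        · rw [hcon l hl2, if_neg (fun h : l = i => hint i hi (h ▸ hl2))]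
        · have hlτ : l ∉ τ := by rw [hτ]; exact fun h => h.elim hl1 hl2
          rw [L1 i (hτ₁τ hi) l hlτ, if_neg (fun h : l = i => hlτ (h ▸ hτ₁τ hi))]
    -- conclude the i-th column of A vanishes
    have hAi : Aᵀ i = 0 := by
      have hfun : (fun l => S l i) = Pi.single i (1:ℝ) := by
        ext l
        rw [hrowall l, Pi.single_apply]
      have h := hcol i
      rw [hfun, Matrix.mulVec_single] at h
      ext r
      simpa using congrFun h r
    -- forbidden decomposition
    refine hind ⟨{i}, τ \ {i}, ⟨i, rfl⟩, ?_, ?_, ?_, ?_⟩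
    · obtain ⟨k, hk⟩ := hne2
      exact ⟨k, hτ₂τ hk, fun h => hint i hi (h ▸ hk)⟩
    · exact Set.disjoint_left.2 (fun j hj => by
        rw [Set.mem_singleton_iff] at hj
        exact fun hj2 => hj2.2 hj)
    · rw [Set.singleton_union, Set.insert_diff_singleton,
        Set.insert_eq_self.2 (hτ₁τ hi)]
    · change Submodule.span ℝ ((fun j => Aᵀ j) '' {i}) ⊓ Submodule.span ℝ ((fun j => Aᵀ j) '' (τ \ {i})) = ⊥
      rw [Set.image_singleton]
      beta_reduce
      rw [hAi, Submodule.span_zero_singleton, bot_inf_eq]
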